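/- Let A be a real unital Banach algebra, j ∈ A with j² = −1, and m, ṁ ∈ A with j·m = −m·j and j·ṁ = −ṁ·j. Suppose u := 1 + (1/2)·j·m is a unit, and set k := u·j·u⁻¹. Then the curve t ↦ (1 + (1/2)·j·(m + t·ṁ))·j·(1 + (1/2)·j·(m + t·ṁ))⁻¹ is differentiable at t = 0 with derivative (1/2)·(1 − k·j)·ṁ·u⁻¹. Moreover, replacing ṁ by j·ṁ multiplies this derivative on the left by k: (1/2)·(1 − k·j)·(j·ṁ)·u⁻¹ = k·((1/2)·(1 − k·j)·ṁ·u⁻¹). -/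

import Mathlib

open scoped ComplexConjugate

/-- In a real unital Banach algebra, with `j² = -1`, `jm = -mj`,
`jm' = -m'j`, and `u := 1 + ½jm` a unit, the curve
`t ↦ (1 + ½j(m + t·m'))·j·(1 + ½j(m + t·m'))⁻¹` is differentiable at `t = 0`
with derivative `½(1 - kj)·m'·u⁻¹`, where `k := u·j·u⁻¹`; moreover replacing
`m'` by `j·m'` multiplies this derivative on the left by `k`. -/
theorem stmt3 (A : Type*) [NormedRing A] [NormedAlgebra ℝ A] [CompleteSpace A]
    (j m m' : A) (hj : j * j = -1)
    (hm : j * m = -(m * j)) (hm' : j * m' = -(m' * j))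
    (u : Aˣ) (hu : (u : A) = 1 + (1/2 : ℝ) • (j * m)) :
    (HasDerivAt
      (fun t : ℝ =>
        (1 + (1/2 : ℝ) • (j * (m + t • m'))) * j *
          Ring.inverse (1 + (1/2 : ℝ) • (j * (m + t • m'))))
      ((1/2 : ℝ) • ((1 - (u : A) * j * (↑u⁻¹ : A) * j) * m' * (↑u⁻¹ : A))) 0) ∧
    (1/2 : ℝ) • ((1 - (u : A) * j * (↑u⁻¹ : A) * j) * (j * m') * (↑u⁻¹ : A)) =
      ((u : A) * j * (↑u⁻¹ : A)) *
        ((1/2 : ℝ) • ((1 - (u : A) * j * (↑u⁻¹ : A) * j) * m' * (↑u⁻¹ : A))) := by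
  set iu : A := (↑u⁻¹ : A) with hiu_def
  have hui : (↑u : A) * iu = 1 := u.mul_inv
  have hiu : iu * (↑u : A) = 1 := u.inv_mul
  set k : A := (↑u : A) * j * iu with hk_def
  have hv0 : (1 : A) + (1/2 : ℝ) • (j * (m + (0:ℝ) • m')) = (↑u : A) := by
    simp [hu]
  have hjm'j : j * m' * j = m' := by
    calc j * m' * j = -(m' * j) * j := by rw [hm']
    _ = -(m' * (j * j)) := by noncomm_ring
    _ = m' := by rw [hj]; simp
  constructor
  · -- derivative part
    have hv : HasDerivAt (fun t : ℝ => (1 : A) + (1/2 : ℝ) • (j * (m + t • m')))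
        ((1/2 : ℝ) • (j * m')) 0 := by
      have h1 : HasDerivAt (fun t : ℝ => m + t • m') m' 0 := by
        simpa using ((hasDerivAt_id (0:ℝ)).smul_const m').const_add m
      have h2 := (h1.const_mul j).const_smul (1/2 : ℝ)
      simpa using h2.const_add (1 : A)
    have hinv : HasDerivAt (fun t : ℝ => Ring.inverse ((1 : A) + (1/2 : ℝ) • (j * (m + t • m'))))
        (-(iu * ((1/2 : ℝ) • (j * m')) * iu)) 0 := by
      have hF := hasFDerivAt_ringInverse (𝕜 := ℝ) u
      rw [← hv0] at hF
      have := hF.comp_hasDerivAt 0 hv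
      simpa [Function.comp_def, ← hiu_def] using this
    have hmul := (hv.mul_const j).mul hinv
    rw [hv0] at hmul
    convert hmul using 1
    · rfl
    rw [Ring.inverse_unit]
    have e1 : j * m' * j * iu = m' * iu := by rw [hjm'j]
    have e2 : (↑u : A) * j * (iu * (j * m') * iu) = ((↑u : A) * j * iu * j) * m' * iu := by
      noncomm_ring
    calc (1/2 : ℝ) • ((1 - (↑u : A) * j * iu * j) * m' * iu)
        = (1/2 : ℝ) • (j * m' * j * iu) - (1/2 : ℝ) • ((↑u : A) * j * (iu * (j * m') * iu)) := by
          rw [e1, e2]; rw [← smul_sub]; congr 1; noncomm_ring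
    _ = (1/2 : ℝ) • (j * m') * j * iu + (↑u : A) * j * -(iu * ((1/2 : ℝ) • (j * m')) * iu) := by
          simp only [smul_mul_assoc, mul_smul_comm, mul_neg, smul_neg, sub_eq_add_neg]
  · -- intertwining identity
    have hk2 : k * k = -1 := by
      calc k * k = (↑u : A) * j * ((iu * ↑u) * (j * iu)) := by rw [hk_def]; noncomm_ring
      _ = (↑u : A) * (j * j) * iu := by rw [hiu]; noncomm_ring
      _ = -1 := by rw [hj]; simp [mul_assoc, hui]
    have hkey : (1 - k * j) * j = k * (1 - k * j) := by
      have l1 : (1 - k * j) * j = j - k * (j * j) := by noncomm_ring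
      have l2 : k * (1 - k * j) = k - (k * k) * j := by noncomm_ring
      rw [l1, l2, hj, hk2]; noncomm_ring
    rw [mul_smul_comm]
    congr 1
    calc (1 - k * j) * (j * m') * iu = ((1 - k * j) * j) * m' * iu := by noncomm_ring
    _ = (k * (1 - k * j)) * m' * iu := by rw [hkey]
    _ = k * ((1 - k * j) * m' * iu) := by noncomm_ring
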